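/- Let c be a clique (complete graph) on a finite vertex set and H a set of k edges among vertices of c. Then the graph c - H obtained by deleting the edges of H from c has at most 2^k maximal cliques. -/

import Mathlib

open SimpleGraph

/-- `s` is a maximal clique of the simple graph `G`. -/
def MaxClique {V : Type*} (G : SimpleGraph V) (s : Set V) : Prop :=
  G.IsClique s ∧ ∀ t : Set V, G.IsClique t → s ⊆ t → s = t

/-- The graph obtained from `G` by adding the edge `(u,v)`. -/
def addEdge {V : Type*} (G : SimpleGraph V) (u v : V) : SimpleGraph V :=
  G ⊔ SimpleGraph.fromEdgeSet {s(u, v)}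

/-- The graph obtained from `G` by adding the set of edges `H`. -/
def addEdges {V : Type*} (G : SimpleGraph V) (H : Set (Sym2 V)) : SimpleGraph V :=
  G ⊔ SimpleGraph.fromEdgeSet H

/-- The number of maximal cliques of `G`. -/
noncomputable def numMaxCliques {V : Type*} (G : SimpleGraph V) : ℕ :=
  Nat.card {s : Set V // MaxClique G s}

/-- `f k`: the maximum possible number of maximal cliques in a graph on `k` vertices. -/
noncomputable def maxNumMaxCliques (k : ℕ) : ℕ :=
  sSup {m | ∃ G : SimpleGraph (Fin k), m = numMaxCliques G}

/-- Every clique of a graph on a finite vertex set extends to a maximal clique. -/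
lemma exists_maxClique {V : Type*} [Fintype V] (G : SimpleGraph V) {s : Set V}
    (hs : G.IsClique s) : ∃ t, MaxClique G t ∧ s ⊆ t := by
  obtain ⟨t, ⟨ht, hst⟩, hmax⟩ := Set.Finite.exists_maximalFor id {t | G.IsClique t ∧ s ⊆ t}
    (Set.toFinite _) ⟨s, hs, subset_rfl⟩
  exact ⟨t, ⟨ht, fun r hr htr => Set.Subset.antisymm htr (hmax ⟨hr, hst.trans htr⟩ htr)⟩, hst⟩

/-- A clique avoiding the pair `{u,v}` survives deletion of the edge `s(u,v)`. -/
lemma clique_deleteEdge {V : Type*} (G : SimpleGraph V) (u v : V) {s : Set V}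
    (hs : G.IsClique s) (h : ¬(u ∈ s ∧ v ∈ s)) :
    (G.deleteEdges {s(u, v)}).IsClique s := by
  intro a ha b hb hab
  refine SimpleGraph.deleteEdges_adj.mpr ⟨hs ha hb hab, ?_⟩
  intro heq
  simp only [Set.mem_singleton_iff, Sym2.eq, Sym2.rel_iff', Prod.mk.injEq,
    Prod.swap_prod_mk] at heq
  rcases heq with ⟨rfl, rfl⟩ | ⟨rfl, rfl⟩
  · exact h ⟨ha, hb⟩
  · exact h ⟨hb, ha⟩

/-- A clique of the graph with `s(u,v)` deleted cannot contain both `u` and `v`. -/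
lemma not_both_mem {V : Type*} {G : SimpleGraph V} {u v : V} (huv : u ≠ v) {s : Set V}
    (hs : (G.deleteEdges {s(u, v)}).IsClique s) : ¬(u ∈ s ∧ v ∈ s) := by
  rintro ⟨hu, hv⟩
  exact (SimpleGraph.deleteEdges_adj.mp (hs hu hv huv)).2 rfl

/-- Structure of maximal cliques of `G - uv` that are not maximal cliques of `G`. -/
lemma nonmax_structure {V : Type*} [Fintype V] (G : SimpleGraph V) {u v : V} (huv : u ≠ v)
    {s : Set V} (hs : MaxClique (G.deleteEdges {s(u, v)}) s) (hns : ¬ MaxClique G s) :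
    MaxClique G (s ∪ {u, v}) ∧ (u ∈ s ↔ v ∉ s) := by
  have hsG : G.IsClique s := hs.1.mono (SimpleGraph.deleteEdges_le _)
  have hne := not_both_mem huv hs.1
  obtain ⟨t, ht, hst⟩ := exists_maxClique G hsG
  have huvt : u ∈ t ∧ v ∈ t := by
    by_contra h
    have : s = t := hs.2 t (clique_deleteEdge G u v ht.1 h) hst
    exact hns (this ▸ ht)
  by_cases hu : u ∈ s
  · have hv : v ∉ s := fun hv => hne ⟨hu, hv⟩
    have hsub : s ⊆ t \ {v} := fun x hx => ⟨hst hx, fun hxv => hv (Set.mem_singleton_iff.mp hxv ▸ hx)⟩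
    have heq : s = t \ {v} := hs.2 _ (clique_deleteEdge G u v (ht.1.subset Set.diff_subset)
      (fun h => h.2.2 rfl)) hsub
    have hst' : s ∪ {u, v} = t := by
      ext x
      constructor
      · rintro (hx | (rfl | rfl))
        · exact hst hx
        · exact huvt.1
        · exact huvt.2
      · intro hx
        by_cases hxv : x = v
        · exact Or.inr (Or.inr hxv)
        · exact Or.inl (heq ▸ ⟨hx, hxv⟩)
    exact ⟨hst' ▸ ht, by simp [hu, hv]⟩
  · -- u ∉ s; show v ∈ s
    have hsub : s ⊆ t \ {u} := fun x hx => ⟨hst hx, fun hxu => hu (Set.mem_singleton_iff.mp hxu ▸ hx)⟩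
    have heq : s = t \ {u} := hs.2 _ (clique_deleteEdge G u v (ht.1.subset Set.diff_subset)
      (fun h => h.1.2 rfl)) hsub
    have hv : v ∈ s := heq ▸ ⟨huvt.2, fun h => huv (Set.mem_singleton_iff.mp h).symm⟩
    have hst' : s ∪ {u, v} = t := by
      ext x
      constructor
      · rintro (hx | (rfl | rfl))
        · exact hst hx
        · exact huvt.1
        · exact huvt.2
      · intro hx
        by_cases hxu : x = u
        · exact Or.inr (Or.inl hxu)
        · exact Or.inl (heq ▸ ⟨hx, hxu⟩)
    exact ⟨hst' ▸ ht, by simp [hu, hv]⟩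

lemma union_cancel {V : Type*} {u v : V} {s₁ s₂ : Set V}
    (h : s₁ ∪ {u, v} = s₂ ∪ {u, v}) (hu : u ∈ s₁ ↔ u ∈ s₂) (hv : v ∈ s₁ ↔ v ∈ s₂) :
    s₁ = s₂ := by
  ext x
  by_cases hxu : x = u
  · subst hxu; exact hu
  by_cases hxv : x = v
  · subst hxv; exact hv
  constructor
  · intro hx
    have : x ∈ s₂ ∪ {u, v} := h ▸ Or.inl hx
    rcases this with hx' | (h' | h') <;> first | exact hx' | exact absurd h' hxu | exact absurd h' hxv
  · intro hx
    have : x ∈ s₁ ∪ {u, v} := h.symm ▸ Or.inl hx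
    rcases this with hx' | (h' | h') <;> first | exact hx' | exact absurd h' hxu | exact absurd h' hxv

/-- Deleting a single edge at most doubles the number of maximal cliques. -/
lemma deleteEdge_step {V : Type*} [Fintype V] (G : SimpleGraph V) {u v : V} (huv : u ≠ v) :
    numMaxCliques (G.deleteEdges {s(u, v)}) ≤ 2 * numMaxCliques G := by
  classical
  set G' := G.deleteEdges {s(u, v)} with hG'
  let f : {s : Set V // MaxClique G' s} → {t : Set V // MaxClique G t} × Bool :=
    fun s => if h : MaxClique G s.1 then (⟨s.1, h⟩, if u ∈ s.1 then true else false)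
      else (⟨s.1 ∪ {u, v}, (nonmax_structure G huv s.2 h).1⟩, if u ∈ s.1 then true else false)
  have hinj : Function.Injective f := by
    rintro ⟨s₁, hs₁⟩ ⟨s₂, hs₂⟩ heq
    by_cases h1 : MaxClique G s₁ <;> by_cases h2 : MaxClique G s₂ <;>
      simp only [f, h1, h2, dif_pos, dif_neg, not_false_iff, Prod.mk.injEq,
        Subtype.mk.injEq] at heq
    · exact Subtype.ext heq.1
    · exfalso
      have hval : s₁ = s₂ ∪ {u, v} := heq.1
      exact not_both_mem huv hs₁.1 ⟨hval ▸ Or.inr (Or.inl rfl), hval ▸ Or.inr (Or.inr rfl)⟩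
    · exfalso
      have hval : s₁ ∪ {u, v} = s₂ := heq.1
      exact not_both_mem huv hs₂.1 ⟨hval ▸ Or.inr (Or.inl rfl), hval ▸ Or.inr (Or.inr rfl)⟩
    · have hval : s₁ ∪ {u, v} = s₂ ∪ {u, v} := heq.1
      have hbool := heq.2
      have hu : u ∈ s₁ ↔ u ∈ s₂ := by
        by_cases h1' : u ∈ s₁ <;> by_cases h2' : u ∈ s₂ <;> simp_all
      have hiff1 := (nonmax_structure G huv hs₁ h1).2
      have hiff2 := (nonmax_structure G huv hs₂ h2).2
      have hv : v ∈ s₁ ↔ v ∈ s₂ := by tauto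
      exact Subtype.ext (union_cancel hval hu hv)
  have hle := Nat.card_le_card_of_injective f hinj
  have hb : Nat.card Bool = 2 := by simp [Nat.card_eq_fintype_card]
  rwa [Nat.card_prod, hb, mul_comm] at hle

lemma numMaxCliques_top_le_one {V : Type*} [Fintype V] :
    numMaxCliques (⊤ : SimpleGraph V) ≤ 1 := by
  have hsub : Subsingleton {s : Set V // MaxClique (⊤ : SimpleGraph V) s} := by
    constructor
    rintro ⟨s₁, hs₁⟩ ⟨s₂, hs₂⟩
    have hcl : (⊤ : SimpleGraph V).IsClique Set.univ := fun a _ b _ hab => hab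
    have h1 : s₁ = Set.univ := hs₁.2 _ hcl (Set.subset_univ _)
    have h2 : s₂ = Set.univ := hs₂.2 _ hcl (Set.subset_univ _)
    exact Subtype.ext (h1.trans h2.symm)
  haveI := hsub
  calc Nat.card {s : Set V // MaxClique (⊤ : SimpleGraph V) s}
      ≤ Nat.card Unit :=
        Nat.card_le_card_of_injective (fun _ => ())
          (fun a b _ => Subsingleton.elim a b)
    _ = 1 := by simp

theorem stmt_8 {V : Type*} [Fintype V] (k : ℕ) (H : Finset (Sym2 V))
    (hH : (H : Set (Sym2 V)) ⊆ (⊤ : SimpleGraph V).edgeSet) (hk : H.card = k) :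
    numMaxCliques ((⊤ : SimpleGraph V).deleteEdges ↑H) ≤ 2 ^ k := by
  classical
  subst hk
  induction H using Finset.induction with
  | empty =>
    simpa using numMaxCliques_top_le_one (V := V)
  | @insert a s ha ih =>
    have hHa : a ∈ (⊤ : SimpleGraph V).edgeSet := hH (by simp)
    have hHs : (s : Set (Sym2 V)) ⊆ (⊤ : SimpleGraph V).edgeSet :=
      fun x hx => hH (by simp [hx])
    obtain ⟨u, v, rfl⟩ : ∃ u v, a = s(u, v) := by
      induction a using Sym2.ind with
      | _ x y => exact ⟨x, y, rfl⟩
    have huv : u ≠ v := by simpa using hHa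
    have hrw : ((insert s(u, v) s : Finset (Sym2 V)) : Set (Sym2 V)) =
        (s : Set (Sym2 V)) ∪ {s(u, v)} := by
      ext x; simp [or_comm]
    rw [hrw, ← SimpleGraph.deleteEdges_deleteEdges]
    calc numMaxCliques (((⊤ : SimpleGraph V).deleteEdges ↑s).deleteEdges {s(u, v)})
        ≤ 2 * numMaxCliques ((⊤ : SimpleGraph V).deleteEdges ↑s) :=
          deleteEdge_step _ huv
      _ ≤ 2 * 2 ^ s.card := by
          exact Nat.mul_le_mul_left 2 (ih hHs)
      _ = 2 ^ (insert s(u, v) s).card := by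
          rw [Finset.card_insert_of_notMem ha, pow_succ, mul_comm]
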